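/- Let k ≥ h be non-negative integers and let N ≥ 1. Then |V|_N(2k,2h) = Σ_{j=0}^{2h} binom(2h,j) · (M)_N(2k,j) · (𝔦N/2)^{2h−j}, where 𝔦 is the imaginary unit. -/

import Mathlib

open MeasureTheory Complex

noncomputable instance {N : ℕ} : MeasurableSpace (Matrix (Fin N) (Fin N) ℂ) := borel _

noncomputable def Zchar {N : ℕ} (U : Matrix.unitaryGroup (Fin N) ℂ) (θ : ℝ) : ℂ :=
  Matrix.det ((1 : Matrix (Fin N) (Fin N) ℂ)
    - Complex.exp (-(Complex.I * (θ : ℂ))) • (U : Matrix (Fin N) (Fin N) ℂ))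

noncomputable def Vchar {N : ℕ} (θj : Fin N → ℝ) (U : Matrix.unitaryGroup (Fin N) ℂ)
    (θ : ℝ) : ℂ :=
  Complex.exp (Complex.I * N * ((θ : ℂ) + (Real.pi : ℂ)) / 2)
    * Complex.exp (-(Complex.I * ((∑ j, θj j : ℝ) : ℂ)) / 2) * Zchar U θ

noncomputable def Mmom (N k r : ℕ) (μ : Measure (Matrix.unitaryGroup (Fin N) ℂ)) : ℂ :=
  ∫ U, (‖Zchar U 0‖ : ℂ) ^ (2 * k) * (deriv (Zchar U) 0 / Zchar U 0) ^ r ∂μ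

instance {N : ℕ} : BorelSpace (Matrix (Fin N) (Fin N) ℂ) := ⟨rfl⟩

open Polynomial in
lemma eval_charpoly_aux {N : ℕ} (M : Matrix (Fin N) (Fin N) ℂ) (x : ℂ) :
    M.charpoly.eval x = (x • (1 : Matrix (Fin N) (Fin N) ℂ) - M).det := by
  rw [Matrix.charpoly, ← Polynomial.coe_evalRingHom, RingHom.map_det]
  congr 1
  ext i j
  rcases eq_or_ne i j with hij | hij <;>
    simp [Matrix.charmatrix_apply, hij, Matrix.one_apply, Matrix.diagonal_apply]

lemma Zchar_eq_prod {N : ℕ} (U : Matrix.unitaryGroup (Fin N) ℂ) (t : Fin N → ℝ)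
    (hU : (U : Matrix (Fin N) (Fin N) ℂ).charpoly
        = ∏ j, (Polynomial.X - Polynomial.C (Complex.exp (Complex.I * (t j : ℂ))))) (θ : ℝ) :
    Zchar U θ = ∏ j, (1 - Complex.exp (Complex.I * (t j : ℂ) - Complex.I * θ)) := by
  set z : ℂ := Complex.exp (-(Complex.I * (θ : ℂ))) with hzdef
  have hz : z ≠ 0 := Complex.exp_ne_zero _
  have h1 : (1 : Matrix (Fin N) (Fin N) ℂ) - z • (U : Matrix (Fin N) (Fin N) ℂ)
      = z • (z⁻¹ • (1 : Matrix (Fin N) (Fin N) ℂ) - (U : Matrix (Fin N) (Fin N) ℂ)) := by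
    rw [smul_sub, smul_smul, mul_inv_cancel₀ hz, one_smul]
  have h2 : ((U : Matrix (Fin N) (Fin N) ℂ).charpoly).eval z⁻¹
      = ∏ j, (z⁻¹ - Complex.exp (Complex.I * (t j : ℂ))) := by
    rw [hU, Polynomial.eval_prod]
    simp
  rw [Zchar, h1, Matrix.det_smul, ← eval_charpoly_aux, h2, Fintype.card_fin,
    ← Fin.prod_const N z, ← Finset.prod_mul_distrib]
  refine Finset.prod_congr rfl fun j _ => ?_
  rw [mul_sub, mul_inv_cancel₀ hz, hzdef, ← Complex.exp_add]
  ring_nf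

lemma hasDerivAt_fact (c : ℂ) (x : ℝ) :
    HasDerivAt (fun θ : ℝ => 1 - Complex.exp (c - Complex.I * θ))
      (Complex.I * Complex.exp (c - Complex.I * x)) x := by
  have h1 : HasDerivAt (fun z : ℂ => 1 - Complex.exp (c - Complex.I * z))
      (Complex.I * Complex.exp (c - Complex.I * x)) (x : ℂ) := by
    have hu : HasDerivAt (fun z : ℂ => c - Complex.I * z) (-Complex.I) (x : ℂ) := by
      simpa using ((hasDerivAt_id (x : ℂ)).const_mul Complex.I).const_sub c
    have h2 := ((Complex.hasDerivAt_exp _).comp (x : ℂ) hu).const_sub 1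
    exact h2.congr_deriv (by ring)
  exact h1.comp_ofReal

lemma hasDerivAt_Zprod {N : ℕ} (t : Fin N → ℝ) :
    HasDerivAt (fun θ : ℝ => ∏ j, (1 - Complex.exp (Complex.I * (t j : ℂ) - Complex.I * θ)))
      (∑ j, (∏ l ∈ Finset.univ.erase j, (1 - Complex.exp (Complex.I * (t l : ℂ)))) *
        (Complex.I * Complex.exp (Complex.I * (t j : ℂ)))) 0 := by
  have h := HasDerivAt.fun_finsetProd (x := (0:ℝ)) (u := Finset.univ)
    (f := fun j (θ : ℝ) => 1 - Complex.exp (Complex.I * (t j : ℂ) - Complex.I * θ))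
    (f' := fun j => Complex.I * Complex.exp (Complex.I * (t j : ℂ) - Complex.I * ((0:ℝ) : ℂ)))
    (fun j _ => hasDerivAt_fact _ _)
  simpa [smul_eq_mul] using h

lemma hasDerivAt_Zchar {N : ℕ} (U : Matrix.unitaryGroup (Fin N) ℂ) (t : Fin N → ℝ)
    (hU : (U : Matrix (Fin N) (Fin N) ℂ).charpoly
        = ∏ j, (Polynomial.X - Polynomial.C (Complex.exp (Complex.I * (t j : ℂ))))) :
    HasDerivAt (Zchar U)
      (∑ j, (∏ l ∈ Finset.univ.erase j, (1 - Complex.exp (Complex.I * (t l : ℂ)))) *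
        (Complex.I * Complex.exp (Complex.I * (t j : ℂ)))) 0 := by
  have h : Zchar U = fun θ : ℝ =>
      ∏ j, (1 - Complex.exp (Complex.I * (t j : ℂ) - Complex.I * θ)) :=
    funext (Zchar_eq_prod U t hU)
  rw [h]
  exact hasDerivAt_Zprod t

lemma hasDerivAt_Vchar {N : ℕ} (t : Fin N → ℝ) (U : Matrix.unitaryGroup (Fin N) ℂ)
    {D : ℂ} (hZ : HasDerivAt (Zchar U) D 0) :
    HasDerivAt (Vchar t U)
      (Complex.I * N / 2 * Vchar t U 0
        + (Complex.exp (Complex.I * N * (((0:ℝ) : ℂ) + (Real.pi : ℂ)) / 2)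
            * Complex.exp (-(Complex.I * ((∑ j, t j : ℝ) : ℂ)) / 2)) * D) 0 := by
  set c2 : ℂ := Complex.exp (-(Complex.I * ((∑ j, t j : ℝ) : ℂ)) / 2) with hc2
  have he1 : ∀ x : ℝ, HasDerivAt (fun θ : ℝ => Complex.exp (Complex.I * N * ((θ : ℂ) + (Real.pi : ℂ)) / 2))
      (Complex.I * N / 2 * Complex.exp (Complex.I * N * ((x : ℂ) + (Real.pi : ℂ)) / 2)) x := by
    intro x
    have hin : HasDerivAt (fun z : ℂ => Complex.I * N * (z + (Real.pi : ℂ)) / 2)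
        (Complex.I * N / 2) (x : ℂ) := by
      simpa using (((hasDerivAt_id (x : ℂ)).add_const (Real.pi : ℂ)).const_mul
        (Complex.I * N)).div_const 2
    have := ((Complex.hasDerivAt_exp _).comp (x : ℂ) hin).comp_ofReal
    exact this.congr_deriv (by ring)
  have h := ((he1 0).mul_const c2).fun_mul hZ
  have hf : Vchar t U = fun θ : ℝ =>
      Complex.exp (Complex.I * N * ((θ : ℂ) + (Real.pi : ℂ)) / 2) * c2 * Zchar U θ :=
    funext fun θ => by rw [Vchar, hc2]
  rw [hf]
  refine h.congr_deriv ?_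
  ring

lemma norm_Vchar {N : ℕ} (t : Fin N → ℝ) (U : Matrix.unitaryGroup (Fin N) ℂ) (θ : ℝ) :
    ‖Vchar t U θ‖ = ‖Zchar U θ‖ := by
  rw [Vchar, norm_mul, norm_mul, Complex.norm_exp, Complex.norm_exp]
  have h1 : (Complex.I * N * ((θ : ℂ) + (Real.pi : ℂ)) / 2).re = 0 := by
    simp [Complex.div_re, Complex.mul_re, Complex.mul_im]
  have h2 : (-(Complex.I * ((∑ j, t j : ℝ) : ℂ)) / 2).re = 0 := by
    simp [Complex.div_re]
  rw [h1, h2]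
  simp

lemma Vratio {N : ℕ} (t : Fin N → ℝ) (U : Matrix.unitaryGroup (Fin N) ℂ)
    (hU : (U : Matrix (Fin N) (Fin N) ℂ).charpoly
        = ∏ j, (Polynomial.X - Polynomial.C (Complex.exp (Complex.I * (t j : ℂ)))))
    (hZ0 : Zchar U 0 ≠ 0) :
    deriv (Vchar t U) 0 / Vchar t U 0
      = Complex.I * N / 2 + deriv (Zchar U) 0 / Zchar U 0 := by
  have hZ := hasDerivAt_Zchar U t hU
  have hV := hasDerivAt_Vchar t U hZ
  have hDeq : deriv (Zchar U) 0
      = ∑ j, (∏ l ∈ Finset.univ.erase j, (1 - Complex.exp (Complex.I * (t l : ℂ)))) *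
        (Complex.I * Complex.exp (Complex.I * (t j : ℂ))) := hZ.deriv
  rw [hV.deriv, ← hDeq]
  set A : ℂ := Complex.exp (Complex.I * N * (((0:ℝ) : ℂ) + (Real.pi : ℂ)) / 2)
      * Complex.exp (-(Complex.I * ((∑ j, t j : ℝ) : ℂ)) / 2) with hA
  have hAne : A ≠ 0 := mul_ne_zero (Complex.exp_ne_zero _) (Complex.exp_ne_zero _)
  have hV0 : Vchar t U 0 = A * Zchar U 0 := by rw [Vchar, hA]
  rw [hV0]
  field_simp

lemma im_ratio {N : ℕ} (t : Fin N → ℝ) (U : Matrix.unitaryGroup (Fin N) ℂ)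
    (hU : (U : Matrix (Fin N) (Fin N) ℂ).charpoly
        = ∏ j, (Polynomial.X - Polynomial.C (Complex.exp (Complex.I * (t j : ℂ)))))
    (hZ0 : Zchar U 0 ≠ 0) :
    (Complex.I * N / 2 + deriv (Zchar U) 0 / Zchar U 0).im = 0 := by
  have hprod : Zchar U 0 = ∏ j, (1 - Complex.exp (Complex.I * (t j : ℂ))) := by
    have := Zchar_eq_prod U t hU 0
    simpa using this
  have hne : ∀ j : Fin N, (1 : ℂ) - Complex.exp (Complex.I * (t j : ℂ)) ≠ 0 := by
    rw [hprod] at hZ0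
    intro j hj
    exact hZ0 (Finset.prod_eq_zero (Finset.mem_univ j) hj)
  have hDeq : deriv (Zchar U) 0
      = ∑ j, (∏ l ∈ Finset.univ.erase j, (1 - Complex.exp (Complex.I * (t l : ℂ)))) *
        (Complex.I * Complex.exp (Complex.I * (t j : ℂ))) := (hasDerivAt_Zchar U t hU).deriv
  have key : deriv (Zchar U) 0 / Zchar U 0
      = ∑ j, Complex.I * Complex.exp (Complex.I * (t j : ℂ))
          / (1 - Complex.exp (Complex.I * (t j : ℂ))) := by
    rw [hDeq, hprod, Finset.sum_div]
    refine Finset.sum_congr rfl fun j _ => ?_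
    rw [← Finset.mul_prod_erase _ _ (Finset.mem_univ j),
      mul_comm ((1 : ℂ) - Complex.exp (Complex.I * (t j : ℂ))) _,
      mul_div_mul_left _ _ (Finset.prod_ne_zero_iff.2 fun l _ => hne l)]
  have him : ∀ j : Fin N,
      (Complex.I * Complex.exp (Complex.I * (t j : ℂ))
        / (1 - Complex.exp (Complex.I * (t j : ℂ)))).im = -(1/2) := by
    intro j
    set w : ℂ := Complex.exp (Complex.I * (t j : ℂ)) with hw
    have hw0 : w ≠ 0 := Complex.exp_ne_zero _
    have h1w : (1 : ℂ) - w ≠ 0 := hne j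
    have hconj : (starRingEnd ℂ) w = w⁻¹ := by
      rw [hw, ← Complex.exp_conj, ← Complex.exp_neg]
      congr 1
      simp [Complex.conj_ofReal]
    have huw : (starRingEnd ℂ) w * w = 1 := by rw [hconj]; exact inv_mul_cancel₀ hw0
    set u : ℂ := (starRingEnd ℂ) w with hu
    have h1u : (1 : ℂ) - u ≠ 0 := by
      intro hcon
      have hu1 : u = 1 := by linear_combination -hcon
      apply h1w
      rw [hu1, one_mul] at huw
      rw [huw]; ring
    have hx : w / (1 - w) + (starRingEnd ℂ) (w / (1 - w)) = -1 := by
      rw [map_div₀, map_sub, map_one, ← hu, div_add_div _ _ h1w h1u,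
        div_eq_iff (mul_ne_zero h1w h1u)]
      linear_combination -huw
    have hre : (w / (1 - w)).re = -(1/2) := by
      have := congrArg Complex.re hx
      simp only [Complex.add_re, Complex.conj_re, Complex.neg_re, Complex.one_re] at this
      linarith
    rw [mul_div_assoc]
    simp [Complex.mul_im, hre]
  rw [key]
  simp only [Complex.add_im, Complex.im_sum]
  have h1 : (Complex.I * (N : ℂ) / 2).im = N / 2 := by
    simp [Complex.div_im]
  rw [h1]
  rw [Finset.sum_congr rfl fun j _ => him j]
  simp
  ring

lemma pointwise_master {N k h : ℕ} (hkh : h ≤ k) (U : Matrix.unitaryGroup (Fin N) ℂ)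
    (t : Fin N → ℝ)
    (hU : (U : Matrix (Fin N) (Fin N) ℂ).charpoly
        = ∏ j, (Polynomial.X - Polynomial.C (Complex.exp (Complex.I * (t j : ℂ))))) :
    ((‖Vchar t U 0‖ ^ (2 * k) * ‖deriv (Vchar t U) 0 / Vchar t U 0‖ ^ (2 * h) : ℝ) : ℂ)
      = ∑ i ∈ Finset.range (2 * h + 1), (Nat.choose (2 * h) i : ℂ) *
          ((‖Zchar U 0‖ : ℂ) ^ (2 * k) * (deriv (Zchar U) 0 / Zchar U 0) ^ i)
          * (Complex.I * N / 2) ^ (2 * h - i) := by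
  by_cases hZ0 : Zchar U 0 = 0
  · have hV0 : Vchar t U 0 = 0 := by rw [Vchar, hZ0, mul_zero]
    rcases Nat.eq_zero_or_pos k with hk | hk
    · have hh : h = 0 := le_antisymm (hk ▸ hkh) (Nat.zero_le _)
      subst hk hh
      simp [hV0, hZ0]
    · have h2k : 2 * k ≠ 0 := by omega
      simp [hV0, hZ0, zero_pow h2k]
  · have hrat := Vratio t U hU hZ0
    have him := im_ratio t U hU hZ0
    set ρ : ℂ := Complex.I * N / 2 + deriv (Zchar U) 0 / Zchar U 0 with hρ
    have hρre : ((ρ.re : ℝ) : ℂ) = ρ := by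
      apply Complex.ext <;> simp [him]
    have hnormρ : ‖deriv (Vchar t U) 0 / Vchar t U 0‖ = |ρ.re| := by
      rw [hrat, ← hρre]
      simp
    rw [norm_Vchar, hnormρ]
    push_cast
    have habs : ((|ρ.re| : ℝ) : ℂ) ^ (2 * h) = ρ ^ (2 * h) := by
      rw [← hρre]
      norm_cast
      exact Even.pow_abs ⟨h, by ring⟩ _
    rw [habs]
    have hexp : ρ ^ (2 * h) = ∑ i ∈ Finset.range (2 * h + 1),
        (deriv (Zchar U) 0 / Zchar U 0) ^ i * (Complex.I * N / 2) ^ (2 * h - i)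
          * (Nat.choose (2 * h) i : ℂ) := by
      rw [hρ, add_comm, add_pow]
    rw [hexp, Finset.mul_sum]
    refine Finset.sum_congr rfl fun i hi => ?_
    ring

lemma measurable_Zchar_at {N : ℕ} (θ : ℝ) :
    Measurable fun U : Matrix.unitaryGroup (Fin N) ℂ => Zchar U θ := by
  have hc : Continuous fun M : Matrix (Fin N) (Fin N) ℂ =>
      Matrix.det (1 - Complex.exp (-(Complex.I * (θ : ℂ))) • M) :=
    Continuous.matrix_det (continuous_const.sub (continuous_const_smul _))
  exact hc.measurable.comp measurable_subtype_coe

lemma measurable_deriv_Zchar {N : ℕ}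
    (hd : ∀ U : Matrix.unitaryGroup (Fin N) ℂ, DifferentiableAt ℝ (Zchar U) 0) :
    Measurable fun U : Matrix.unitaryGroup (Fin N) ℂ => deriv (Zchar U) 0 := by
  have hmem : ∀ n : ℕ, (1 : ℝ) / (n + 1) ∈ ({(0:ℝ)}ᶜ : Set ℝ) := by
    intro n
    simp only [Set.mem_compl_iff, Set.mem_singleton_iff]
    positivity
  have ht : Filter.Tendsto (fun n : ℕ => (1 : ℝ) / (n + 1)) Filter.atTop (nhdsWithin 0 {(0:ℝ)}ᶜ) :=
    tendsto_nhdsWithin_of_tendsto_nhds_of_eventually_within _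
      tendsto_one_div_add_atTop_nhds_zero_nat (Filter.Eventually.of_forall hmem)
  have key : ∀ U : Matrix.unitaryGroup (Fin N) ℂ,
      Filter.Tendsto (fun n : ℕ => slope (Zchar U) 0 ((1 : ℝ) / (n + 1))) Filter.atTop
        (nhds (deriv (Zchar U) 0)) := fun U =>
    (hasDerivAt_iff_tendsto_slope.mp (hd U).hasDerivAt).comp ht
  refine measurable_of_tendsto_metrizable (fun n => ?_) (tendsto_pi_nhds.mpr key)
  have heq : (fun U : Matrix.unitaryGroup (Fin N) ℂ => slope (Zchar U) 0 ((1 : ℝ) / (n + 1)))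
      = fun U => ((1 : ℝ) / (n + 1) - 0)⁻¹ • (Zchar U ((1 : ℝ) / (n + 1)) - Zchar U 0) := by
    funext U
    simp [slope]
  rw [heq]
  exact (((measurable_Zchar_at _).sub (measurable_Zchar_at 0)).const_smul ((1 : ℝ) / (n + 1) - 0)⁻¹)

lemma norm_Zchar_le {N : ℕ} (U : Matrix.unitaryGroup (Fin N) ℂ) (t : Fin N → ℝ)
    (hU : (U : Matrix (Fin N) (Fin N) ℂ).charpoly
        = ∏ j, (Polynomial.X - Polynomial.C (Complex.exp (Complex.I * (t j : ℂ))))) :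
    ‖Zchar U 0‖ ≤ 2 ^ N := by
  rw [Zchar_eq_prod U t hU 0, norm_prod]
  calc ∏ j, ‖1 - Complex.exp (Complex.I * (t j : ℂ) - Complex.I * ((0:ℝ) : ℂ))‖
      ≤ ∏ _j : Fin N, (2 : ℝ) := by
        refine Finset.prod_le_prod (fun j _ => norm_nonneg _) (fun j _ => ?_)
        calc ‖1 - Complex.exp (Complex.I * (t j : ℂ) - Complex.I * ((0:ℝ) : ℂ))‖
            ≤ ‖(1 : ℂ)‖ + ‖Complex.exp (Complex.I * (t j : ℂ) - Complex.I * ((0:ℝ) : ℂ))‖ :=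
              norm_sub_le _ _
          _ ≤ 2 := by
              rw [Complex.norm_exp]
              have : (Complex.I * (t j : ℂ) - Complex.I * ((0:ℝ) : ℂ)).re = 0 := by simp
              rw [this]
              norm_num
    _ = 2 ^ N := by rw [Finset.prod_const, Finset.card_univ, Fintype.card_fin]

lemma norm_deriv_Zchar_le {N : ℕ} (U : Matrix.unitaryGroup (Fin N) ℂ) (t : Fin N → ℝ)
    (hU : (U : Matrix (Fin N) (Fin N) ℂ).charpoly
        = ∏ j, (Polynomial.X - Polynomial.C (Complex.exp (Complex.I * (t j : ℂ))))) :
    ‖deriv (Zchar U) 0‖ ≤ N * 2 ^ N := by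
  rw [(hasDerivAt_Zchar U t hU).deriv]
  have hterm : ∀ j : Fin N,
      ‖(∏ l ∈ Finset.univ.erase j, (1 - Complex.exp (Complex.I * (t l : ℂ)))) *
        (Complex.I * Complex.exp (Complex.I * (t j : ℂ)))‖ ≤ 2 ^ N := by
    intro j
    rw [norm_mul, norm_mul, norm_prod]
    have h1 : ‖Complex.I‖ = 1 := by simp
    have h2 : ∀ l : Fin N, ‖Complex.exp (Complex.I * (t l : ℂ))‖ = 1 := by
      intro l
      rw [Complex.norm_exp]
      have : (Complex.I * (t l : ℂ)).re = 0 := by simp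
      rw [this, Real.exp_zero]
    rw [h1, h2, one_mul, mul_one]
    calc ∏ l ∈ Finset.univ.erase j, ‖1 - Complex.exp (Complex.I * (t l : ℂ))‖
        ≤ ∏ _l ∈ Finset.univ.erase j, (2 : ℝ) := by
          refine Finset.prod_le_prod (fun l _ => norm_nonneg _) (fun l _ => ?_)
          calc ‖1 - Complex.exp (Complex.I * (t l : ℂ))‖
              ≤ ‖(1:ℂ)‖ + ‖Complex.exp (Complex.I * (t l : ℂ))‖ := norm_sub_le _ _
            _ ≤ 2 := by rw [h2 l]; norm_num
      _ = 2 ^ (Finset.univ.erase j).card := Finset.prod_const 2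
      _ ≤ 2 ^ N := by
          apply pow_le_pow_right₀ one_le_two
          calc (Finset.univ.erase j).card ≤ Finset.univ.card := Finset.card_le_card
                (Finset.erase_subset _ _)
            _ = N := by rw [Finset.card_univ, Fintype.card_fin]
  calc ‖∑ j, (∏ l ∈ Finset.univ.erase j, (1 - Complex.exp (Complex.I * (t l : ℂ)))) *
        (Complex.I * Complex.exp (Complex.I * (t j : ℂ)))‖
      ≤ ∑ j : Fin N, (2 : ℝ) ^ N := norm_sum_le_of_le _ fun j _ => hterm j
    _ = N * 2 ^ N := by rw [Finset.sum_const, Finset.card_univ, Fintype.card_fin, nsmul_eq_mul]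

lemma integrable_core {N k : ℕ} (j : ℕ) (hj : j ≤ 2 * k)
    (μ : Measure (Matrix.unitaryGroup (Fin N) ℂ)) [IsProbabilityMeasure μ]
    (θj : Matrix.unitaryGroup (Fin N) ℂ → Fin N → ℝ)
    (hθj : ∀ U : Matrix.unitaryGroup (Fin N) ℂ,
      (U : Matrix (Fin N) (Fin N) ℂ).charpoly
        = ∏ l, (Polynomial.X - Polynomial.C (Complex.exp (Complex.I * (θj U l : ℂ))))) :
    Integrable (fun U : Matrix.unitaryGroup (Fin N) ℂ =>
      (‖Zchar U 0‖ : ℂ) ^ (2 * k) * (deriv (Zchar U) 0 / Zchar U 0) ^ j) μ := by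
  have hd : ∀ U : Matrix.unitaryGroup (Fin N) ℂ, DifferentiableAt ℝ (Zchar U) 0 := fun U =>
    (hasDerivAt_Zchar U (θj U) (hθj U)).differentiableAt
  have hmeas : Measurable fun U : Matrix.unitaryGroup (Fin N) ℂ =>
      (‖Zchar U 0‖ : ℂ) ^ (2 * k) * (deriv (Zchar U) 0 / Zchar U 0) ^ j := by
    apply Measurable.mul
    · exact (Complex.measurable_ofReal.comp (measurable_Zchar_at 0).norm).pow_const _
    · exact ((measurable_deriv_Zchar hd).div (measurable_Zchar_at 0)).pow_const _
  refine (integrable_const (((2:ℝ) ^ N) ^ (2 * k) * ((N : ℝ) * 2 ^ N) ^ j + 1)).mono'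
    hmeas.aestronglyMeasurable (Filter.Eventually.of_forall fun U => ?_)
  have hC : (0:ℝ) ≤ ((2:ℝ) ^ N) ^ (2 * k) * ((N : ℝ) * 2 ^ N) ^ j := by positivity
  rw [norm_mul, norm_pow, norm_pow]
  have hno : ‖((‖Zchar U 0‖ : ℝ) : ℂ)‖ = ‖Zchar U 0‖ := by simp
  rw [hno, norm_div]
  by_cases hZ0 : Zchar U 0 = 0
  · rw [hZ0]
    have h01 : ∀ m : ℕ, ‖(0:ℂ)‖ ^ m ≤ 1 := by
      intro m
      rw [norm_zero]
      rcases m with _ | m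
      · norm_num
      · rw [zero_pow (Nat.succ_ne_zero m)]; norm_num
    have h1 : ‖(0:ℂ)‖ ^ (2 * k) * (‖deriv (Zchar U) 0‖ / ‖(0:ℂ)‖) ^ j ≤ 1 := by
      rw [norm_zero, div_zero]
      have := h01 (2 * k)
      rw [norm_zero] at this
      calc (0:ℝ) ^ (2*k) * (0:ℝ) ^ j ≤ 1 * 1 := by
            apply mul_le_mul _ _ (by positivity) (by norm_num)
            · simpa using this
            · rcases j with _ | j
              · norm_num
              · rw [zero_pow (Nat.succ_ne_zero j)]; norm_num
        _ = 1 := by norm_num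
    linarith
  · have ha : 0 < ‖Zchar U 0‖ := norm_pos_iff.mpr hZ0
    have hZb : ‖Zchar U 0‖ ≤ 2 ^ N := norm_Zchar_le U (θj U) (hθj U)
    have hDb : ‖deriv (Zchar U) 0‖ ≤ (N : ℝ) * 2 ^ N := norm_deriv_Zchar_le U (θj U) (hθj U)
    have key : ‖Zchar U 0‖ ^ (2 * k) * (‖deriv (Zchar U) 0‖ / ‖Zchar U 0‖) ^ j
        = ‖Zchar U 0‖ ^ (2 * k - j) * ‖deriv (Zchar U) 0‖ ^ j := by
      have hsplit : ‖Zchar U 0‖ ^ (2 * k) = ‖Zchar U 0‖ ^ (2 * k - j) * ‖Zchar U 0‖ ^ j := by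
        rw [← pow_add]
        congr 1
        omega
      rw [hsplit, div_pow, mul_assoc, ← mul_div_assoc,
        mul_div_cancel_left₀ _ (pow_ne_zero j ha.ne')]
    rw [key]
    have step1 : ‖Zchar U 0‖ ^ (2 * k - j) * ‖deriv (Zchar U) 0‖ ^ j
        ≤ ((2:ℝ) ^ N) ^ (2 * k - j) * ((N : ℝ) * 2 ^ N) ^ j := by
      gcongr
      all_goals first
        | exact ha.le
        | exact norm_nonneg _
        | exact hZb
        | exact hDb
    have step2 : ((2:ℝ) ^ N) ^ (2 * k - j) ≤ ((2:ℝ) ^ N) ^ (2 * k) := by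
      apply pow_le_pow_right₀ (one_le_pow₀ one_le_two) (by omega)
    calc ‖Zchar U 0‖ ^ (2 * k - j) * ‖deriv (Zchar U) 0‖ ^ j
        ≤ ((2:ℝ) ^ N) ^ (2 * k - j) * ((N : ℝ) * 2 ^ N) ^ j := step1
      _ ≤ ((2:ℝ) ^ N) ^ (2 * k) * ((N : ℝ) * 2 ^ N) ^ j := by
          apply mul_le_mul_of_nonneg_right step2 (by positivity)
      _ ≤ ((2:ℝ) ^ N) ^ (2 * k) * ((N : ℝ) * 2 ^ N) ^ j + 1 := by linarith

theorem statement0 (N k h : ℕ) (hN : 1 ≤ N) (hkh : h ≤ k)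
    (μham : Measure (Matrix.unitaryGroup (Fin N) ℂ))
    [μham.IsHaarMeasure] [IsProbabilityMeasure μham]
    (θj : Matrix.unitaryGroup (Fin N) ℂ → Fin N → ℝ)
    (hθj : ∀ U : Matrix.unitaryGroup (Fin N) ℂ,
      (U : Matrix (Fin N) (Fin N) ℂ).charpoly
        = ∏ j, (Polynomial.X - Polynomial.C (Complex.exp (Complex.I * (θj U j : ℂ))))) :
    ((∫ U, ‖Vchar (θj U) U 0‖ ^ (2 * k)
        * ‖deriv (Vchar (θj U) U) 0 / Vchar (θj U) U 0‖ ^ (2 * h) ∂μham : ℝ) : ℂ)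
      = ∑ i ∈ Finset.range (2 * h + 1),
          (Nat.choose (2 * h) i : ℂ) * Mmom N k i μham
            * (Complex.I * N / 2) ^ (2 * h - i) := by
  have hint : ∀ i ∈ Finset.range (2 * h + 1),
      Integrable (fun U : Matrix.unitaryGroup (Fin N) ℂ =>
        (Nat.choose (2 * h) i : ℂ)
          * ((‖Zchar U 0‖ : ℂ) ^ (2 * k) * (deriv (Zchar U) 0 / Zchar U 0) ^ i)
          * (Complex.I * N / 2) ^ (2 * h - i)) μham := by
    intro i hi
    have hi' : i ≤ 2 * k := by
      have := Finset.mem_range.mp hi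
      omega
    exact ((integrable_core i hi' μham θj hθj).const_mul _).mul_const _
  have hcast : ((∫ U, ‖Vchar (θj U) U 0‖ ^ (2 * k)
        * ‖deriv (Vchar (θj U) U) 0 / Vchar (θj U) U 0‖ ^ (2 * h) ∂μham : ℝ) : ℂ)
      = ∫ U, ((‖Vchar (θj U) U 0‖ ^ (2 * k)
        * ‖deriv (Vchar (θj U) U) 0 / Vchar (θj U) U 0‖ ^ (2 * h) : ℝ) : ℂ) ∂μham :=
    (integral_ofReal (𝕜 := ℂ)).symm
  rw [hcast]
  rw [show (fun U : Matrix.unitaryGroup (Fin N) ℂ =>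
        ((‖Vchar (θj U) U 0‖ ^ (2 * k)
          * ‖deriv (Vchar (θj U) U) 0 / Vchar (θj U) U 0‖ ^ (2 * h) : ℝ) : ℂ))
      = fun U : Matrix.unitaryGroup (Fin N) ℂ =>
          ∑ i ∈ Finset.range (2 * h + 1), (Nat.choose (2 * h) i : ℂ) *
            ((‖Zchar U 0‖ : ℂ) ^ (2 * k) * (deriv (Zchar U) 0 / Zchar U 0) ^ i)
            * (Complex.I * N / 2) ^ (2 * h - i)
    from funext fun U => pointwise_master hkh U (θj U) (hθj U)]
  rw [integral_finset_sum _ hint]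
  refine Finset.sum_congr rfl fun i hi => ?_
  rw [integral_mul_const, integral_const_mul, Mmom]
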